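/- Let H be a d×d symmetric positive definite real matrix, g ∈ ℝ^d, and ε ∈ (0, 1). Suppose H̃_1, …, H̃_m are symmetric positive definite matrices with (1−ε)H ⪯ H̃_i ⪯ (1+ε)H for every i ∈ [m] and (1/m)·Σ_{i=1}^m H̃_i = H. Let p* = H⁻¹g, p̃ = (1/m)·Σ_{i=1}^m H̃_i⁻¹g, and let H^{1/2} denote the positive semidefinite square root of H. Then ‖H^{1/2}(p̃ − p*)‖₂ ≤ (ε²/(1−ε))·‖H^{1/2}p*‖₂. -/

import Mathlib

open Matrix

noncomputable section

/-- The Euclidean (ℓ2) norm of a vector in `ℝ^d`. -/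
def norm2 {d : ℕ} (x : Fin d → ℝ) : ℝ := Real.sqrt (x ⬝ᵥ x)

section

open scoped ComplexOrder

/-- The positive semidefinite square root of a positive semidefinite matrix
(Mathlib's former `Matrix.PosSemidef.sqrt`, with its old definition). -/
def Matrix.PosSemidef.sqrt {n 𝕜 : Type*} [Fintype n] [RCLike 𝕜] [DecidableEq n]
    {A : Matrix n n 𝕜} (hA : A.PosSemidef) : Matrix n n 𝕜 :=
  hA.1.eigenvectorUnitary.1 * diagonal ((↑) ∘ (√·) ∘ hA.1.eigenvalues) *
    (star hA.1.eigenvectorUnitary : Matrix n n 𝕜)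

end

namespace GiantAux

local notation "⟪" x ", " y "⟫" => @inner ℝ _ _ x y

lemma psd_sqrt_mul_self {d : ℕ} {H : Matrix (Fin d) (Fin d) ℝ} (hH : H.PosSemidef) :
    hH.sqrt * hH.sqrt = H := by
  have hU : (star hH.1.eigenvectorUnitary : Matrix (Fin d) (Fin d) ℝ) *
      hH.1.eigenvectorUnitary.1 = 1 := Unitary.coe_star_mul_self _
  have hD : diagonal (((↑) ∘ (√·) ∘ hH.1.eigenvalues) : Fin d → ℝ) *
      diagonal ((↑) ∘ (√·) ∘ hH.1.eigenvalues) = diagonal (RCLike.ofReal ∘ hH.1.eigenvalues) := by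
    rw [diagonal_mul_diagonal]; congr 1; funext i
    simp [Real.mul_self_sqrt (hH.eigenvalues_nonneg i)]
  conv_rhs => rw [hH.1.spectral_theorem, Unitary.conjStarAlgAut_apply]
  rw [Matrix.PosSemidef.sqrt, ← hD]
  rw [show ∀ (X Y U V : Matrix (Fin d) (Fin d) ℝ), U * X * V * (U * Y * V) = U * X * (V * U) * Y * V
    from fun X Y U V => by simp only [Matrix.mul_assoc], hU, Matrix.mul_one]
  simp only [Matrix.mul_assoc]
  rfl

lemma psd_sqrt_psd {d : ℕ} {H : Matrix (Fin d) (Fin d) ℝ} (hH : H.PosSemidef) :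
    hH.sqrt.PosSemidef := by
  have h := (posSemidef_diagonal_iff.mpr fun i => by simp [Real.sqrt_nonneg] :
    (diagonal (((↑) ∘ (√·) ∘ hH.1.eigenvalues) : Fin d → ℝ)).PosSemidef).conjTranspose_mul_mul_same
    (star (hH.1.eigenvectorUnitary : Matrix (Fin d) (Fin d) ℝ))
  rw [← Matrix.star_eq_conjTranspose, star_star] at h
  exact h

lemma norm2_eq_norm {d : ℕ} (x : Fin d → ℝ) :
    norm2 x = ‖(WithLp.equiv 2 (Fin d → ℝ)).symm x‖ := by
  rw [norm2, EuclideanSpace.norm_eq]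
  congr 1
  simp [dotProduct, Real.norm_eq_abs, sq_abs, sq]

lemma sum_mulVec' {d m : ℕ} (A : Fin m → Matrix (Fin d) (Fin d) ℝ) (g : Fin d → ℝ) :
    (∑ i, A i) *ᵥ g = ∑ i, (A i *ᵥ g) := by
  ext j
  simp [mulVec, dotProduct, Matrix.sum_apply, Finset.sum_mul]
  rw [Finset.sum_comm]

/-- Operator norm bound for a symmetric matrix with an orthonormal eigenbasis. -/
lemma opbound {d : ℕ} (B : Matrix (Fin d) (Fin d) ℝ) (hB : Bᵀ = B)
    (b : OrthonormalBasis (Fin d) ℝ (EuclideanSpace ℝ (Fin d))) (μ : Fin d → ℝ)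
    (hBb : ∀ j, B *ᵥ ⇑(b j) = μ j • ⇑(b j)) (c : ℝ) (hc : 0 ≤ c) (hμ : ∀ j, |μ j| ≤ c)
    (y : Fin d → ℝ) : norm2 (B *ᵥ y) ≤ c * norm2 y := by
  rw [norm2_eq_norm, norm2_eq_norm]
  set Y : EuclideanSpace ℝ (Fin d) := (WithLp.equiv 2 (Fin d → ℝ)).symm y with hY
  set Z : EuclideanSpace ℝ (Fin d) := (WithLp.equiv 2 (Fin d → ℝ)).symm (B *ᵥ y) with hZ
  have key : ∀ j, ⟪b j, Z⟫ = μ j * ⟪b j, Y⟫ := by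
    intro j
    have h1 : ⟪b j, Z⟫ = (⇑(b j) : Fin d → ℝ) ⬝ᵥ (B *ᵥ y) := by
      rw [EuclideanSpace.inner_eq_star_dotProduct, dotProduct_comm]; rfl
    have h2 : ⟪b j, Y⟫ = (⇑(b j) : Fin d → ℝ) ⬝ᵥ y := by
      rw [EuclideanSpace.inner_eq_star_dotProduct, dotProduct_comm]; rfl
    rw [h1, h2, dotProduct_mulVec, ← Matrix.mulVec_transpose, hB, hBb j,
      smul_dotProduct, smul_eq_mul]
  have hnZ : ‖Z‖ ^ 2 = ∑ j, (μ j * ⟪b j, Y⟫) ^ 2 := by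
    rw [← b.repr.norm_map Z, EuclideanSpace.norm_eq, Real.sq_sqrt (by positivity)]
    exact Finset.sum_congr rfl fun j _ => by
      rw [Real.norm_eq_abs, sq_abs, b.repr_apply_apply, key j]
  have hnY : ‖Y‖ ^ 2 = ∑ j, (⟪b j, Y⟫) ^ 2 := by
    rw [← b.repr.norm_map Y, EuclideanSpace.norm_eq, Real.sq_sqrt (by positivity)]
    exact Finset.sum_congr rfl fun j _ => by
      rw [Real.norm_eq_abs, sq_abs, b.repr_apply_apply]
  have hsq : ‖Z‖ ^ 2 ≤ (c * ‖Y‖) ^ 2 := by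
    rw [hnZ, mul_pow, hnY, Finset.mul_sum]
    refine Finset.sum_le_sum fun j _ => ?_
    rw [mul_pow]
    have : (μ j) ^ 2 ≤ c ^ 2 := by
      rw [← sq_abs (μ j)]
      exact pow_le_pow_left₀ (abs_nonneg _) (hμ j) 2
    nlinarith [sq_nonneg (⟪b j, Y⟫)]
  exact (pow_le_pow_iff_left₀ (norm_nonneg _) (by positivity) two_ne_zero).mp hsq

lemma real_herm_transpose {d : ℕ} {A : Matrix (Fin d) (Fin d) ℝ} (hA : A.IsHermitian) :
    Aᵀ = A := by
  ext i j
  have := congrFun (congrFun hA i) j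
  simpa [Matrix.conjTranspose_apply] using this

lemma single_bound {d : ℕ} {A : Matrix (Fin d) (Fin d) ℝ} (hA : A.PosDef) {ε : ℝ}
    (hε : 0 < ε ∧ ε < 1)
    (hlow : (A - (1 - ε) • (1 : Matrix (Fin d) (Fin d) ℝ)).PosSemidef)
    (hup : ((1 + ε) • (1 : Matrix (Fin d) (Fin d) ℝ) - A).PosSemidef)
    (y : Fin d → ℝ) :
    norm2 ((A⁻¹ + A - (2 : ℝ) • 1) *ᵥ y) ≤ (ε ^ 2 / (1 - ε)) * norm2 y := by
  obtain ⟨hε0, hε1⟩ := hε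
  set b := hA.1.eigenvectorBasis with hb
  set μ := hA.1.eigenvalues with hμdef
  have hAb : ∀ j, A *ᵥ ⇑(b j) = μ j • ⇑(b j) := hA.1.mulVec_eigenvectorBasis
  have hv1 : ∀ j, (⇑(b j) : Fin d → ℝ) ⬝ᵥ ⇑(b j) = 1 := by
    intro j
    have h := b.orthonormal.1 j
    have : ⟪b j, b j⟫ = 1 := by
      rw [real_inner_self_eq_norm_sq, h]; norm_num
    rw [EuclideanSpace.inner_eq_star_dotProduct] at this
    simpa using this
  have hμlow : ∀ j, 1 - ε ≤ μ j := by
    intro j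
    have h := hlow.dotProduct_mulVec_nonneg (⇑(b j))
    simp only [Matrix.sub_mulVec, Matrix.smul_mulVec, Matrix.one_mulVec,
      dotProduct_sub, dotProduct_smul, hAb j, smul_dotProduct, smul_eq_mul,
      hv1 j, mul_one, star_trivial, RCLike.re_to_real] at h
    linarith
  have hμup : ∀ j, μ j ≤ 1 + ε := by
    intro j
    have h := hup.dotProduct_mulVec_nonneg (⇑(b j))
    simp only [Matrix.sub_mulVec, Matrix.smul_mulVec, Matrix.one_mulVec,
      dotProduct_sub, dotProduct_smul, hAb j, smul_dotProduct, smul_eq_mul,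
      hv1 j, mul_one, star_trivial, RCLike.re_to_real] at h
    linarith
  have hμpos : ∀ j, 0 < μ j := fun j => lt_of_lt_of_le (by linarith) (hμlow j)
  have hMb : ∀ j, (A⁻¹ + A - (2 : ℝ) • 1) *ᵥ ⇑(b j) = ((μ j)⁻¹ + μ j - 2) • ⇑(b j) := by
    intro j
    have hinv : A⁻¹ *ᵥ ⇑(b j) = (μ j)⁻¹ • ⇑(b j) := by
      have h1 : A⁻¹ *ᵥ (A *ᵥ ⇑(b j)) = ⇑(b j) := by
        rw [Matrix.mulVec_mulVec, Matrix.nonsing_inv_mul _ hA.det_pos.ne'.isUnit,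
          Matrix.one_mulVec]
      rw [hAb j, Matrix.mulVec_smul] at h1
      calc A⁻¹ *ᵥ ⇑(b j) = (μ j)⁻¹ • (μ j • (A⁻¹ *ᵥ ⇑(b j))) := by
            rw [smul_smul, inv_mul_cancel₀ (ne_of_gt (hμpos j)), one_smul]
        _ = (μ j)⁻¹ • ⇑(b j) := by rw [h1]
    funext k
    simp [Matrix.sub_mulVec, Matrix.add_mulVec, Matrix.smul_mulVec, Matrix.one_mulVec,
      hinv, hAb j, Pi.smul_apply, smul_eq_mul]
    ring
  have hMsym : (A⁻¹ + A - (2 : ℝ) • 1)ᵀ = A⁻¹ + A - (2 : ℝ) • 1 := by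
    have h1 := real_herm_transpose hA.1
    have h2 := real_herm_transpose hA.1.inv
    rw [Matrix.transpose_sub, Matrix.transpose_add, Matrix.transpose_smul,
      Matrix.transpose_one, h1, h2]
  have hcpos : 0 ≤ ε ^ 2 / (1 - ε) := div_nonneg (sq_nonneg ε) (by linarith)
  refine opbound _ hMsym b _ hMb _ hcpos (fun j => ?_) y
  rw [abs_le]
  have h1 := hμlow j; have h2 := hμup j; have h3 := hμpos j
  have hmul : μ j * (μ j)⁻¹ = 1 := mul_inv_cancel₀ (ne_of_gt h3)
  have hfnn : 0 ≤ (μ j)⁻¹ + μ j - 2 := by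
    nlinarith [sq_nonneg (μ j - 1), hmul, h3]
  constructor
  · linarith
  · rw [le_div_iff₀ (by linarith : (0:ℝ) < 1 - ε)]
    nlinarith [hmul, h3, mul_nonneg (by linarith : (0:ℝ) ≤ μ j - (1 - ε))
      (by linarith : (0:ℝ) ≤ 1 + ε - μ j), sq_nonneg (μ j - 1)]

end GiantAux

open GiantAux in
/-- the averaged approximate Newton direction of GIANT is within
`ε²/(1−ε)` of the exact Newton direction `p* = H⁻¹g` in the `H`-weighted norm. -/
theorem giant_model_average_weighted_bound {d m : ℕ}
    (H : Matrix (Fin d) (Fin d) ℝ) (hH : H.PosDef)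
    (g : Fin d → ℝ) (ε : ℝ) (hε : 0 < ε ∧ ε < 1)
    (Htil : Fin m → Matrix (Fin d) (Fin d) ℝ)
    (hHtilPD : ∀ i, (Htil i).PosDef)
    (happrox : ∀ i,
      (Htil i - (1 - ε) • H).PosSemidef ∧ ((1 + ε) • H - Htil i).PosSemidef)
    (havg : ((1 : ℝ) / m) • ∑ i, Htil i = H) :
    norm2 (hH.posSemidef.sqrt *ᵥ ((((1 : ℝ) / m) • ∑ i, (Htil i)⁻¹ *ᵥ g) - H⁻¹ *ᵥ g)) ≤
      (ε ^ 2 / (1 - ε)) * norm2 (hH.posSemidef.sqrt *ᵥ (H⁻¹ *ᵥ g)) := by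
  obtain ⟨hε0, hε1⟩ := hε
  have hcpos : 0 ≤ ε ^ 2 / (1 - ε) := div_nonneg (sq_nonneg ε) (by linarith)
  rcases Nat.eq_zero_or_pos m with hm | hm
  · subst hm
    rcases Nat.eq_zero_or_pos d with hd | hd
    · subst hd
      simp [norm2, dotProduct]
    · exfalso
      have hH0 : H = 0 := by rw [← havg]; simp
      have hx : (fun _ => (1:ℝ) : Fin d → ℝ) ≠ 0 := by
        intro h
        have := congrFun h ⟨0, hd⟩
        norm_num at this
      have := hH.dotProduct_mulVec_pos hx
      rw [hH0] at this
      simp at this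
  -- main case
  have hmne : (m : ℝ) ≠ 0 := Nat.cast_ne_zero.mpr hm.ne'
  set S := hH.posSemidef.sqrt with hSdef
  have hSpsd : S.PosSemidef := psd_sqrt_psd hH.posSemidef
  have hSS : S * S = H := psd_sqrt_mul_self hH.posSemidef
  have hHdet : IsUnit H.det := hH.det_pos.ne'.isUnit
  have hSdet : IsUnit S.det := by
    have hd : S.det * S.det = H.det := by rw [← Matrix.det_mul, hSS]
    rcases eq_or_ne S.det 0 with h0 | h0
    · exfalso; rw [h0, mul_zero] at hd; exact hH.det_pos.ne' hd.symm
    · exact h0.isUnit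
  have hIS : S * S⁻¹ = 1 := Matrix.mul_nonsing_inv _ hSdet
  have hSI : S⁻¹ * S = 1 := Matrix.nonsing_inv_mul _ hSdet
  have hSinv_herm : (S⁻¹).IsHermitian := hSpsd.1.inv
  have hSHS : S⁻¹ * H * S⁻¹ = 1 := by
    rw [← hSS, ← Matrix.mul_assoc S⁻¹ S S, hSI, Matrix.one_mul, hIS]
  have hSHinv : S * H⁻¹ = S⁻¹ := by
    rw [← hSS, Matrix.mul_inv_rev, ← Matrix.mul_assoc, hIS, Matrix.one_mul]
  -- conjugated matrices
  set A : Fin m → Matrix (Fin d) (Fin d) ℝ := fun i => S⁻¹ * Htil i * S⁻¹ with hAdef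
  have hAherm : ∀ i, (A i).IsHermitian := by
    intro i
    have := Matrix.isHermitian_conjTranspose_mul_mul S⁻¹ (hHtilPD i).1
    rwa [hSinv_herm.eq] at this
  have hconj : ∀ (X : Matrix (Fin d) (Fin d) ℝ), X.PosSemidef →
      (S⁻¹ * X * S⁻¹).PosSemidef := by
    intro X hX
    have := hX.conjTranspose_mul_mul_same S⁻¹
    rwa [hSinv_herm.eq] at this
  have hlow : ∀ i, (A i - (1 - ε) • (1 : Matrix (Fin d) (Fin d) ℝ)).PosSemidef := by
    intro i
    have := hconj _ (happrox i).1
    have heq : S⁻¹ * (Htil i - (1 - ε) • H) * S⁻¹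
        = A i - (1 - ε) • (1 : Matrix (Fin d) (Fin d) ℝ) := by
      rw [Matrix.mul_sub, Matrix.sub_mul, Matrix.mul_smul, Matrix.smul_mul, hSHS, hAdef]
    rwa [heq] at this
  have hup : ∀ i, ((1 + ε) • (1 : Matrix (Fin d) (Fin d) ℝ) - A i).PosSemidef := by
    intro i
    have := hconj _ (happrox i).2
    have heq : S⁻¹ * ((1 + ε) • H - Htil i) * S⁻¹
        = (1 + ε) • (1 : Matrix (Fin d) (Fin d) ℝ) - A i := by
      rw [Matrix.mul_sub, Matrix.sub_mul, Matrix.mul_smul, Matrix.smul_mul, hSHS, hAdef]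
    rwa [heq] at this
  have hApd : ∀ i, (A i).PosDef := by
    intro i
    have h1 : ((1 - ε) • (1 : Matrix (Fin d) (Fin d) ℝ)).PosDef := by
      rw [Matrix.smul_one_eq_diagonal]
      exact Matrix.posDef_diagonal_iff.mpr fun _ => by linarith
    have := Matrix.PosDef.posSemidef_add (hlow i) h1
    rwa [sub_add_cancel] at this
  -- the per-term bound
  set M : Fin m → Matrix (Fin d) (Fin d) ℝ := fun i => (A i)⁻¹ + A i - (2:ℝ) • 1 with hMdef
  set y : Fin d → ℝ := S *ᵥ (H⁻¹ *ᵥ g) with hydef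
  have hbound : ∀ i, norm2 (M i *ᵥ y) ≤ (ε ^ 2 / (1 - ε)) * norm2 y :=
    fun i => single_bound (hApd i) ⟨hε0, hε1⟩ (hlow i) (hup i) y
  -- the algebraic identity
  have hAinv : ∀ i, (A i)⁻¹ = S * (Htil i)⁻¹ * S := by
    intro i
    rw [hAdef]
    simp only
    rw [Matrix.mul_inv_rev, Matrix.mul_inv_rev, Matrix.nonsing_inv_nonsing_inv _ hSdet,
      Matrix.mul_assoc]
  have hsumHtil : ∑ i, Htil i = (m : ℝ) • H := by
    rw [← havg, smul_smul]
    rw [mul_one_div, div_self hmne, one_smul]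
  have hkey : S * ((((1 : ℝ) / m) • ∑ i, (Htil i)⁻¹) - H⁻¹)
      = ((1 : ℝ) / m) • ((∑ i, M i) * (S * H⁻¹)) := by
    have hMsum : (∑ i, M i) = S * (∑ i, (Htil i)⁻¹) * S + (m : ℝ) • (1 : Matrix (Fin d) (Fin d) ℝ)
        - ((2 * m : ℝ)) • (1 : Matrix (Fin d) (Fin d) ℝ) := by
      rw [hMdef]
      simp only
      rw [Finset.sum_sub_distrib, Finset.sum_add_distrib]
      congr 1
      · congr 1
        · rw [Finset.sum_congr rfl (fun i _ => hAinv i), ← Finset.sum_mul, ← Matrix.mul_sum]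
        · rw [hAdef]
          simp only
          have : ∑ i, S⁻¹ * Htil i * S⁻¹ = S⁻¹ * (∑ i, Htil i) * S⁻¹ := by
            rw [Matrix.mul_sum, Finset.sum_mul]
          rw [this, hsumHtil, Matrix.mul_smul, Matrix.smul_mul, hSHS]
      · rw [Finset.sum_const, Finset.card_univ, Fintype.card_fin]
        ext j k
        simp [Matrix.smul_apply]
        ring
    have hHH : S * (S * H⁻¹) = 1 := by
      rw [← Matrix.mul_assoc, hSS, Matrix.mul_nonsing_inv _ hHdet]
    have hprod : (S * (∑ i, (Htil i)⁻¹) * S) * (S * H⁻¹) = S * (∑ i, (Htil i)⁻¹) := by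
      rw [Matrix.mul_assoc (S * (∑ i, (Htil i)⁻¹)) S (S * H⁻¹), hHH, Matrix.mul_one]
    rw [hMsum, Matrix.sub_mul, Matrix.add_mul, hprod, Matrix.smul_mul, Matrix.smul_mul,
      Matrix.one_mul, Matrix.mul_sub, Matrix.mul_smul, smul_sub, smul_add, smul_smul, smul_smul]
    have h1 : (1 / m : ℝ) * m = 1 := by field_simp
    have h2 : (1 / m : ℝ) * (2 * m) = 2 := by field_simp
    rw [h1, h2, one_smul, two_smul]
    abel
  -- the vector identity
  have hvec : S *ᵥ ((((1 : ℝ) / m) • ∑ i, (Htil i)⁻¹ *ᵥ g) - H⁻¹ *ᵥ g)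
      = ((1 : ℝ) / m) • ∑ i, (M i *ᵥ y) := by
    have h1 : (((1 : ℝ) / m) • ∑ i, (Htil i)⁻¹ *ᵥ g) - H⁻¹ *ᵥ g
        = ((((1 : ℝ) / m) • ∑ i, (Htil i)⁻¹) - H⁻¹) *ᵥ g := by
      rw [Matrix.sub_mulVec, Matrix.smul_mulVec, sum_mulVec']
    rw [h1, Matrix.mulVec_mulVec, hkey, Matrix.smul_mulVec]
    congr 1
    rw [← Matrix.mulVec_mulVec, ← Matrix.mulVec_mulVec, sum_mulVec']
  rw [hvec]
  -- the final estimate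
  have hmnn : (0 : ℝ) ≤ 1 / m := by positivity
  calc norm2 (((1 : ℝ) / m) • ∑ i, (M i *ᵥ y))
      = (1 / m : ℝ) * ‖∑ i, (WithLp.equiv 2 (Fin d → ℝ)).symm (M i *ᵥ y)‖ := by
        rw [norm2_eq_norm,
          show (WithLp.equiv 2 (Fin d → ℝ)).symm (((1 : ℝ) / m) • ∑ i, (M i *ᵥ y))
            = ((1 : ℝ) / m) • ∑ i, (WithLp.equiv 2 (Fin d → ℝ)).symm (M i *ᵥ y) from by simp,
          norm_smul, Real.norm_eq_abs, abs_of_nonneg hmnn]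
    _ ≤ (1 / m : ℝ) * ∑ i, ‖(WithLp.equiv 2 (Fin d → ℝ)).symm (M i *ᵥ y)‖ := by
        gcongr
        exact norm_sum_le _ _
    _ = (1 / m : ℝ) * ∑ i, norm2 (M i *ᵥ y) := by
        simp_rw [← norm2_eq_norm]
    _ ≤ (1 / m : ℝ) * ∑ i, (ε ^ 2 / (1 - ε)) * norm2 y := by
        gcongr with i
        exact hbound i
    _ = (ε ^ 2 / (1 - ε)) * norm2 y := by
        rw [Finset.sum_const, Finset.card_univ, Fintype.card_fin, nsmul_eq_mul]
        field_simp
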